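/- For a poset-causal system with dual system over the dual poset, the structured controllability and observability subspaces satisfy: (R̄)^d = Ñ^⊥, (R°)^d = (N°)^⊥, (R̃)^d = N̄^⊥, (N̄)^d = R̃^⊥, (N°)^d = (R°)^⊥ and (Ñ)^d = R̄^⊥, where the superscript d denotes the corresponding subspace computed for the dual system (Aᵀ, Cᵀ, Bᵀ, Dᵀ). -/

import Mathlib

open Matrix

attribute [local instance] Classical.propDecidable

/-- Block index type for a partition `n` over the index set `P`. -/
abbrev BIdx {P : Type*} (n : P → ℕ) : Type _ := (i : P) × Fin (n i)

variable {P : Type*} [Fintype P] [DecidableEq P]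

/-- The embedding matrix `I_n(:,S)` of `ℝ^{n_S}` into `ℝ^{n}`. -/
noncomputable def embMat (n : P → ℕ) (S : Set P) :
    Matrix (BIdx n) {a : BIdx n // a.1 ∈ S} ℝ :=
  Matrix.of fun p q => if p = (q : BIdx n) then 1 else 0

/-- The matrix of the orthogonal projection onto the coordinate subspace of block indices in `S`. -/
noncomputable def projMat (n : P → ℕ) (S : Set P) : Matrix (BIdx n) (BIdx n) ℝ :=
  Matrix.of fun p q => if p = q ∧ p.1 ∈ S then 1 else 0

/-- Downstream set `↓S = {i | ∃ j ∈ S, j ⪰ i}` (where `j ⪰ i` is encoded as `le i j`). -/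
def downSet (le : P → P → Prop) (S : Set P) : Set P := {i | ∃ j ∈ S, le i j}

/-- Upstream set `↑S = {i | ∃ j ∈ S, i ⪰ j}`. -/
def upSet (le : P → P → Prop) (S : Set P) : Set P := {i | ∃ j ∈ S, le j i}

/-- Membership of a block matrix in the block incidence space: `G_{ab} = 0` whenever `b ⋡ a`. -/
def Inc (le : P → P → Prop) {n m : P → ℕ} (G : Matrix (BIdx n) (BIdx m) ℝ) : Prop :=
  ∀ a b, ¬ le a.1 b.1 → G a b = 0

/-- Block compression `G(Q,S)` of a block matrix to block rows in `Q` and block columns in `S`. -/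
def bcmp {n m : P → ℕ} (G : Matrix (BIdx n) (BIdx m) ℝ) (Q S : Set P) :
    Matrix {a : BIdx n // a.1 ∈ Q} {a : BIdx m // a.1 ∈ S} ℝ :=
  G.submatrix Subtype.val Subtype.val

/-- The reachable subspace `R(A,B) = im [B, AB, ..., A^{n-1}B]`. -/
noncomputable def reach {ι κ : Type*} [Fintype ι] [Fintype κ] [DecidableEq ι]
    (A : Matrix ι ι ℝ) (B : Matrix ι κ ℝ) : Submodule ℝ (ι → ℝ) :=
  ⨆ k : Fin (Fintype.card ι), LinearMap.range ((A ^ (k : ℕ) * B).mulVecLin)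

/-- The unobservable subspace `N(C,A) = ker [C; CA; ...; CA^{n-1}]`. -/
noncomputable def unobs {ι κ : Type*} [Fintype ι] [Fintype κ] [DecidableEq ι]
    (C : Matrix κ ι ℝ) (A : Matrix ι ι ℝ) : Submodule ℝ (ι → ℝ) :=
  ⨅ k : Fin (Fintype.card ι), LinearMap.ker ((C * A ^ (k : ℕ)).mulVecLin)

/-- The reachable subspace, inside Euclidean space. -/
noncomputable def reachE {ι κ : Type*} [Fintype ι] [Fintype κ] [DecidableEq ι] [DecidableEq κ]
    (A : Matrix ι ι ℝ) (B : Matrix ι κ ℝ) : Submodule ℝ (EuclideanSpace ℝ ι) :=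
  ⨆ k : Fin (Fintype.card ι), LinearMap.range (Matrix.toEuclideanLin (A ^ (k : ℕ) * B))

/-- The unobservable subspace, inside Euclidean space. -/
noncomputable def unobsE {ι κ : Type*} [Fintype ι] [Fintype κ] [DecidableEq ι] [DecidableEq κ]
    (C : Matrix κ ι ℝ) (A : Matrix ι ι ℝ) : Submodule ℝ (EuclideanSpace ℝ ι) :=
  ⨅ k : Fin (Fintype.card ι), LinearMap.ker (Matrix.toEuclideanLin (C * A ^ (k : ℕ)))

/-- The coordinate subspace `X_S = ⊕_{j ∈ S} X_j` of the global state space. -/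
noncomputable def coordSub (n : P → ℕ) (S : Set P) : Submodule ℝ (BIdx n → ℝ) :=
  LinearMap.range (projMat n S).mulVecLin

/-- The coordinate subspace `X_S`, inside Euclidean space. -/
noncomputable def coordE (n : P → ℕ) (S : Set P) : Submodule ℝ (EuclideanSpace ℝ (BIdx n)) :=
  LinearMap.range (Matrix.toEuclideanLin (projMat n S))

/-- The `i`-downstream reachable set `R_i = R(A(↓i,↓i), B(↓i,i))`, embedded into the
global state space via `I_n(:,↓i)`. -/
noncomputable def Ri (le : P → P → Prop) {n m : P → ℕ}
    (A : Matrix (BIdx n) (BIdx n) ℝ) (B : Matrix (BIdx n) (BIdx m) ℝ) (i : P) :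
    Submodule ℝ (BIdx n → ℝ) :=
  Submodule.map (embMat n (downSet le {i})).mulVecLin
    (reach (bcmp A (downSet le {i}) (downSet le {i})) (bcmp B (downSet le {i}) {i}))

/-- The `i`-downstream reachable set, inside Euclidean space. -/
noncomputable def RiE (le : P → P → Prop) {n m : P → ℕ}
    (A : Matrix (BIdx n) (BIdx n) ℝ) (B : Matrix (BIdx n) (BIdx m) ℝ) (i : P) :
    Submodule ℝ (EuclideanSpace ℝ (BIdx n)) :=
  Submodule.map (Matrix.toEuclideanLin (embMat n (downSet le {i})))
    (reachE (bcmp A (downSet le {i}) (downSet le {i})) (bcmp B (downSet le {i}) {i}))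

/-- The `i`-upstream indistinguishable set `N_i = N(C(i,↑i), A(↑i,↑i))`, embedded into the
global state space via `I_n(:,↑i)`. -/
noncomputable def Ni (le : P → P → Prop) {n r : P → ℕ}
    (C : Matrix (BIdx r) (BIdx n) ℝ) (A : Matrix (BIdx n) (BIdx n) ℝ) (i : P) :
    Submodule ℝ (BIdx n → ℝ) :=
  Submodule.map (embMat n (upSet le {i})).mulVecLin
    (unobs (bcmp C {i} (upSet le {i})) (bcmp A (upSet le {i}) (upSet le {i})))

/-- The `i`-upstream indistinguishable set, inside Euclidean space. -/
noncomputable def NiE (le : P → P → Prop) {n r : P → ℕ}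
    (C : Matrix (BIdx r) (BIdx n) ℝ) (A : Matrix (BIdx n) (BIdx n) ℝ) (i : P) :
    Submodule ℝ (EuclideanSpace ℝ (BIdx n)) :=
  Submodule.map (Matrix.toEuclideanLin (embMat n (upSet le {i})))
    (unobsE (bcmp C {i} (upSet le {i})) (bcmp A (upSet le {i}) (upSet le {i})))

/-- The independently reachable subspace `R̄ = ⊕_j Σ_{i∈↑j} (X_j ∩ R_i)`. -/
noncomputable def Rbar (le : P → P → Prop) {n m : P → ℕ}
    (A : Matrix (BIdx n) (BIdx n) ℝ) (B : Matrix (BIdx n) (BIdx m) ℝ) :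
    Submodule ℝ (EuclideanSpace ℝ (BIdx n)) :=
  ⨆ j : P, ⨆ i : P, ⨆ _ : le j i, (coordE n {j} ⊓ RiE le A B i)

/-- The weakly upstream reachable subspace `R̃ = ⊕_j P_{X_j} R`. -/
noncomputable def Rtil {n m : P → ℕ}
    (A : Matrix (BIdx n) (BIdx n) ℝ) (B : Matrix (BIdx n) (BIdx m) ℝ) :
    Submodule ℝ (EuclideanSpace ℝ (BIdx n)) :=
  ⨆ j : P, Submodule.map (Matrix.toEuclideanLin (projMat n {j})) (reachE A B)

/-- The subspace `R° = ⊕_j (X_j ∩ R)`. -/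
noncomputable def Rcirc {n m : P → ℕ}
    (A : Matrix (BIdx n) (BIdx n) ℝ) (B : Matrix (BIdx n) (BIdx m) ℝ) :
    Submodule ℝ (EuclideanSpace ℝ (BIdx n)) :=
  ⨆ j : P, (coordE n {j} ⊓ reachE A B)

/-- The subspace `N̄ = ⊕_j ∩_{i∈↓j} (N_i ∩ X_j)`. -/
noncomputable def Nbar (le : P → P → Prop) {n r : P → ℕ}
    (C : Matrix (BIdx r) (BIdx n) ℝ) (A : Matrix (BIdx n) (BIdx n) ℝ) :
    Submodule ℝ (EuclideanSpace ℝ (BIdx n)) :=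
  ⨆ j : P, ⨅ i : P, ⨅ _ : le i j, (NiE le C A i ⊓ coordE n {j})

/-- The subspace `Ñ = ⊕_j ∩_{i∈↓j} P_{X_j} N_i`. -/
noncomputable def Ntil (le : P → P → Prop) {n r : P → ℕ}
    (C : Matrix (BIdx r) (BIdx n) ℝ) (A : Matrix (BIdx n) (BIdx n) ℝ) :
    Submodule ℝ (EuclideanSpace ℝ (BIdx n)) :=
  ⨆ j : P, ⨅ i : P, ⨅ _ : le i j,
    Submodule.map (Matrix.toEuclideanLin (projMat n {j})) (NiE le C A i)

/-- The subspace `N° = ⊕_j P_{X_j} N`. -/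
noncomputable def Ncirc {n r : P → ℕ}
    (C : Matrix (BIdx r) (BIdx n) ℝ) (A : Matrix (BIdx n) (BIdx n) ℝ) :
    Submodule ℝ (EuclideanSpace ℝ (BIdx n)) :=
  ⨆ j : P, Submodule.map (Matrix.toEuclideanLin (projMat n {j})) (unobsE C A)


section general
variable {ι κ : Type*} [Fintype ι] [Fintype κ] [DecidableEq ι] [DecidableEq κ]

lemma inner_toEuclideanLin (M : Matrix ι κ ℝ) (x : EuclideanSpace ℝ κ) (y : EuclideanSpace ℝ ι) :
    (inner ℝ (Matrix.toEuclideanLin M x) y : ℝ) = inner ℝ x (Matrix.toEuclideanLin Mᵀ y) := by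
  simp only [PiLp.inner_apply, RCLike.inner_apply, starRingEnd_apply, star_trivial]
  show ∑ i, y i * M.mulVec x i = ∑ i, Mᵀ.mulVec y i * x i
  simp only [mulVec, dotProduct, Finset.sum_mul, Finset.mul_sum, transpose_apply]
  rw [Finset.sum_comm]
  exact Finset.sum_congr rfl fun _ _ => Finset.sum_congr rfl fun _ _ => by ring

lemma orthogonal_range_toEuclideanLin (M : Matrix ι κ ℝ) :
    (LinearMap.range (Matrix.toEuclideanLin M))ᗮ = LinearMap.ker (Matrix.toEuclideanLin Mᵀ) := by
  ext y
  simp only [Submodule.mem_orthogonal, LinearMap.mem_range, LinearMap.mem_ker,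
    forall_exists_index]
  constructor
  · intro h
    have h2 := h (Matrix.toEuclideanLin M (Matrix.toEuclideanLin Mᵀ y)) _ rfl
    rw [inner_toEuclideanLin] at h2
    exact inner_self_eq_zero.mp h2
  · rintro h u x rfl
    rw [inner_toEuclideanLin, h, inner_zero_right]

lemma toEuclideanLin_mul {τ : Type*} [Fintype τ] [DecidableEq τ] (M : Matrix ι κ ℝ)
    (N : Matrix κ τ ℝ) :
    Matrix.toEuclideanLin (M * N) =
      (Matrix.toEuclideanLin M).comp (Matrix.toEuclideanLin N) := by
  apply LinearMap.ext fun x => ?_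
  show WithLp.toLp 2 ((M * N) *ᵥ x.ofLp) = WithLp.toLp 2 (M *ᵥ (N *ᵥ x.ofLp))
  rw [← mulVec_mulVec]

lemma range_toEuclideanLin_transpose (M : Matrix ι κ ℝ) :
    LinearMap.range (Matrix.toEuclideanLin Mᵀ) = (LinearMap.ker (Matrix.toEuclideanLin M))ᗮ := by
  have h := orthogonal_range_toEuclideanLin Mᵀ
  rw [transpose_transpose] at h
  rw [← h, Submodule.orthogonal_orthogonal]

end general
section stab
set_option linter.unusedSectionVars false
variable {ι κ : Type*} [Fintype ι] [Fintype κ] [DecidableEq ι] [DecidableEq κ]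

lemma unobsE_transpose (A : Matrix ι ι ℝ) (B : Matrix ι κ ℝ) :
    unobsE Bᵀ Aᵀ = (reachE A B)ᗮ := by
  unfold unobsE reachE
  rw [← Submodule.iInf_orthogonal]
  exact iInf_congr fun k => by
    rw [show Bᵀ * (Aᵀ) ^ (k : ℕ) = (A ^ (k : ℕ) * B)ᵀ by
      rw [transpose_mul, transpose_pow], orthogonal_range_toEuclideanLin]

lemma reachE_eq_iSup (A : Matrix ι ι ℝ) (B : Matrix ι κ ℝ) :
    reachE A B = ⨆ k : ℕ, LinearMap.range (Matrix.toEuclideanLin (A ^ k * B)) := by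
  classical
  set S : ℕ → Submodule ℝ (EuclideanSpace ℝ ι) :=
    fun k => LinearMap.range (Matrix.toEuclideanLin (A ^ k * B)) with hS
  set F : ℕ → Submodule ℝ (EuclideanSpace ℝ ι) := fun m => ⨆ k, ⨆ _ : k < m, S k with hF
  have hmapS : ∀ k, Submodule.map (Matrix.toEuclideanLin A) (S k) = S (k + 1) := by
    intro k
    rw [hS]
    simp only
    rw [← LinearMap.range_comp, ← toEuclideanLin_mul,
      show A * (A ^ k * B) = A ^ (k + 1) * B by rw [← Matrix.mul_assoc, ← pow_succ']]
  have hFmono : Monotone F := fun a b hab =>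
    iSup_le fun k => iSup_le fun hk => le_iSup_of_le k (le_iSup_of_le (lt_of_lt_of_le hk hab) le_rfl)
  have hstab : ∀ m, F (m + 1) = F m → ∀ k, S k ≤ F m := by
    intro m hm k
    induction k with
    | zero =>
      by_cases h0 : 0 < m + 1
      · exact hm ▸ le_iSup_of_le 0 (le_iSup_of_le h0 le_rfl)
      · omega
    | succ k ih =>
      have : S (k + 1) = Submodule.map (Matrix.toEuclideanLin A) (S k) := (hmapS k).symm
      rw [this]
      refine le_trans (Submodule.map_mono ih) ?_
      rw [hF]
      simp only [Submodule.map_iSup]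
      refine iSup_le fun l => iSup_le fun hl => ?_
      rw [hmapS l]
      have : S (l + 1) ≤ F (m + 1) := le_iSup_of_le (l+1) (le_iSup_of_le (by omega) le_rfl)
      exact this.trans (le_of_eq hm)
  have key : ∀ m : ℕ, (∃ k < m, F (k + 1) = F k) ∨ m ≤ Module.finrank ℝ (F m) := by
    intro m
    induction m with
    | zero => exact Or.inr (Nat.zero_le _)
    | succ m ih =>
      rcases ih with h | h
      · exact Or.inl ⟨h.choose, by omega, h.choose_spec.2⟩
      · by_cases he : F (m + 1) = F m
        · exact Or.inl ⟨m, by omega, he⟩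
        · refine Or.inr ?_
          have hlt : F m < F (m + 1) := lt_of_le_of_ne (hFmono (by omega)) (Ne.symm he)
          have := Submodule.finrank_lt_finrank_of_lt hlt
          omega
  have hcard : Module.finrank ℝ (EuclideanSpace ℝ ι) = Fintype.card ι :=
    finrank_euclideanSpace
  have hFc : F (Fintype.card ι) = ⨆ k : ℕ, S k := by
    rcases key (Fintype.card ι) with ⟨k, hk, hke⟩ | h
    · have h1 : ∀ l, S l ≤ F k := hstab k hke
      apply le_antisymm
      · exact iSup_le fun l => iSup_le fun _ => le_iSup S l
      · exact iSup_le fun l => (h1 l).trans (hFmono (by omega))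
    · have hle : Module.finrank ℝ (F (Fintype.card ι)) ≤ Fintype.card ι := by
        rw [← hcard]; exact Submodule.finrank_le _
      have htop : F (Fintype.card ι) = ⊤ := by
        apply Submodule.eq_top_of_finrank_eq
        rw [hcard]; omega
      refine htop.trans ?_
      have h' : (⊤ : Submodule ℝ (EuclideanSpace ℝ ι)) ≤ ⨆ k : ℕ, S k := by
        rw [← htop]
        exact iSup_le fun l => iSup_le fun _ => le_iSup S l
      exact (top_le_iff.mp h').symm
  rw [← hFc]
  unfold reachE
  apply le_antisymm
  · exact iSup_le fun k => le_iSup_of_le (k : ℕ) (le_iSup_of_le k.2 le_rfl)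
  · exact iSup_le fun l => iSup_le fun hl => le_iSup_of_le ⟨l, hl⟩ le_rfl

lemma reachE_transpose (A : Matrix ι ι ℝ) (C : Matrix κ ι ℝ) :
    reachE Aᵀ Cᵀ = (unobsE C A)ᗮ := by
  have h := unobsE_transpose Aᵀ Cᵀ
  rw [transpose_transpose, transpose_transpose] at h
  rw [h, Submodule.orthogonal_orthogonal]

end stab
section blocks
set_option linter.unusedSectionVars false
variable {P : Type*} [Fintype P] [DecidableEq P] {n : P → ℕ}

lemma projE_apply (S : Set P) (x : EuclideanSpace ℝ (BIdx n)) (a : BIdx n) :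
    Matrix.toEuclideanLin (projMat n S) x a = if a.1 ∈ S then x a else 0 := by
  show (projMat n S).mulVec x a = _
  unfold projMat mulVec dotProduct
  simp only [of_apply]
  rw [Finset.sum_eq_single a]
  · by_cases h : a.1 ∈ S <;> simp [h]
  · intro b _ hb
    rw [if_neg (by tauto), zero_mul]
  · simp

lemma embE_apply (S : Set P) [Fintype {a : BIdx n // a.1 ∈ S}] (y : EuclideanSpace ℝ {a : BIdx n // a.1 ∈ S}) (a : BIdx n) :
    Matrix.toEuclideanLin (embMat n S) y a = if h : a.1 ∈ S then y ⟨a, h⟩ else 0 := by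
  show (embMat n S).mulVec y a = _
  unfold embMat mulVec dotProduct
  simp only [of_apply]
  by_cases h : a.1 ∈ S
  · rw [Finset.sum_eq_single (⟨a, h⟩ : {a : BIdx n // a.1 ∈ S})]
    · simp [h]
    · intro q _ hq
      rw [if_neg (fun he => hq (Subtype.ext he.symm)), zero_mul]
    · simp
  · rw [dif_neg h]
    apply Finset.sum_eq_zero
    intro q _
    rw [if_neg, zero_mul]
    intro he
    rw [he] at h
    exact h q.2

lemma projMat_transpose (S : Set P) : (projMat n S)ᵀ = projMat n S := by
  ext a b
  unfold projMat
  simp only [transpose_apply, of_apply]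
  by_cases h : a = b
  · subst h; rfl
  · rw [if_neg (by tauto), if_neg (by tauto)]

lemma embMat_transpose_mul (S : Set P) : (embMat n S)ᵀ * embMat n S = 1 := by
  ext q q'
  unfold embMat
  simp only [mul_apply, transpose_apply, of_apply]
  rw [Finset.sum_eq_single (q : BIdx n)]
  · rw [if_pos rfl, one_mul]
    by_cases h : q = q'
    · subst h; simp [Matrix.one_apply]
    · rw [if_neg (fun he => h (Subtype.ext he)), Matrix.one_apply_ne h]
  · intro b _ hb
    rw [if_neg hb, zero_mul]
  · simp

lemma embMat_mul_transpose (S : Set P) [Fintype {a : BIdx n // a.1 ∈ S}] : embMat n S * (embMat n S)ᵀ = projMat n S := by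
  ext a b
  unfold embMat projMat
  simp only [mul_apply, transpose_apply, of_apply]
  by_cases h : a.1 ∈ S
  · rw [Finset.sum_eq_single (⟨a, h⟩ : {x : BIdx n // x.1 ∈ S})]
    · by_cases hb : a = b
      · subst hb; simp [h]
      · rw [if_pos rfl, one_mul, if_neg (fun he => hb he.symm), if_neg (by tauto)]
    · intro q _ hq
      rw [if_neg (fun he => hq (Subtype.ext he.symm)), zero_mul]
    · simp
  · rw [if_neg (by tauto)]
    apply Finset.sum_eq_zero
    intro q _
    rw [if_neg, zero_mul]
    intro he
    exact h (he ▸ q.2)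

lemma mem_coordE {S : Set P} {x : EuclideanSpace ℝ (BIdx n)} :
    x ∈ coordE n S ↔ ∀ a : BIdx n, a.1 ∉ S → x a = 0 := by
  constructor
  · rintro ⟨y, rfl⟩ a ha
    rw [projE_apply, if_neg ha]
  · intro h
    refine ⟨x, PiLp.ext fun a => ?_⟩
    rw [projE_apply]
    by_cases h' : a.1 ∈ S
    · rw [if_pos h']
    · rw [if_neg h', h a h']

lemma projE_mem (S : Set P) (x : EuclideanSpace ℝ (BIdx n)) :
    Matrix.toEuclideanLin (projMat n S) x ∈ coordE n S := ⟨x, rfl⟩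

lemma projE_of_mem {S : Set P} {x : EuclideanSpace ℝ (BIdx n)} (h : x ∈ coordE n S) :
    Matrix.toEuclideanLin (projMat n S) x = x := by
  ext a
  rw [projE_apply]
  by_cases h' : a.1 ∈ S
  · rw [if_pos h']
  · rw [if_neg h', (mem_coordE.mp h) a h']

lemma projE_projE {S T : Set P} (h : S ⊆ T) (x : EuclideanSpace ℝ (BIdx n)) :
    Matrix.toEuclideanLin (projMat n S) (Matrix.toEuclideanLin (projMat n T) x) =
      Matrix.toEuclideanLin (projMat n S) x := by
  ext a
  rw [projE_apply, projE_apply, projE_apply]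
  by_cases h' : a.1 ∈ S
  · rw [if_pos h', if_pos h', if_pos (h h')]
  · rw [if_neg h', if_neg h']

lemma projE_zero_of_ne {j k : P} {x : EuclideanSpace ℝ (BIdx n)} (hx : x ∈ coordE n {k})
    (hjk : j ≠ k) : Matrix.toEuclideanLin (projMat n {j}) x = 0 := by
  ext a
  rw [projE_apply]
  by_cases h' : a.1 ∈ ({j} : Set P)
  · rw [if_pos h']
    have : a.1 ∉ ({k} : Set P) := by
      intro hk
      exact hjk (h'.symm.trans hk)
    exact (mem_coordE.mp hx) a this
  · rw [if_neg h']
    rfl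

lemma inner_projE (S : Set P) (x y : EuclideanSpace ℝ (BIdx n)) :
    (inner ℝ (Matrix.toEuclideanLin (projMat n S) x) y : ℝ) =
      inner ℝ x (Matrix.toEuclideanLin (projMat n S) y) := by
  rw [inner_toEuclideanLin, projMat_transpose]

lemma sum_projE (x : EuclideanSpace ℝ (BIdx n)) :
    ∑ j : P, Matrix.toEuclideanLin (projMat n {j}) x = x := by
  ext a
  have hsum : (∑ j : P, Matrix.toEuclideanLin (projMat n {j}) x) a
      = ∑ j : P, Matrix.toEuclideanLin (projMat n {j}) x a := by
    rw [WithLp.ofLp_sum, Finset.sum_apply]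
  rw [hsum]
  simp only [projE_apply]
  simp [Set.mem_singleton_iff]

lemma coordE_mono {S T : Set P} (h : S ⊆ T) : coordE n S ≤ coordE n T := by
  intro x hx
  rw [mem_coordE] at hx ⊢
  exact fun a ha => hx a (fun hS => ha (h hS))

lemma coordE_orthogonal {S T : Set P} (h : ∀ p, p ∈ T → p ∉ S) :
    coordE n S ≤ (coordE n T)ᗮ := by
  intro x hx
  rw [Submodule.mem_orthogonal]
  intro u hu
  have : (inner ℝ u x : ℝ) = ∑ a : BIdx n, u a * x a := by
    simp [PiLp.inner_apply, mul_comm]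
  rw [this]
  apply Finset.sum_eq_zero
  intro a _
  by_cases ha : a.1 ∈ T
  · rw [mem_coordE.mp hx a (h a.1 ha), mul_zero]
  · rw [mem_coordE.mp hu a ha, zero_mul]

lemma mem_iSup_blockwise {W : P → Submodule ℝ (EuclideanSpace ℝ (BIdx n))}
    (hW : ∀ j, W j ≤ coordE n {j}) (x : EuclideanSpace ℝ (BIdx n)) :
    x ∈ (⨆ j, W j) ↔ ∀ j, Matrix.toEuclideanLin (projMat n {j}) x ∈ W j := by
  constructor
  · intro hx
    have hle : (⨆ j, W j) ≤ ⨅ j, (W j).comap (Matrix.toEuclideanLin (projMat n {j})) := by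
      refine iSup_le fun k => le_iInf fun j => ?_
      intro y hy
      rw [Submodule.mem_comap]
      by_cases h : j = k
      · subst h
        rw [projE_of_mem (hW j hy)]
        exact hy
      · rw [projE_zero_of_ne (hW k hy) h]
        exact Submodule.zero_mem _
    intro j
    exact Submodule.mem_comap.mp ((Submodule.mem_iInf _).mp (hle hx) j)
  · intro h
    rw [← sum_projE (n := n) x]
    exact Submodule.sum_mem _ fun j _ => Submodule.mem_iSup_of_mem j (h j)

lemma mem_orthogonal_projE {S : Set P} {V : Submodule ℝ (EuclideanSpace ℝ (BIdx n))}
    (hV : V ≤ coordE n S) (x : EuclideanSpace ℝ (BIdx n)) :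
    Matrix.toEuclideanLin (projMat n S) x ∈ Vᗮ ↔ x ∈ Vᗮ := by
  have key : ∀ v ∈ V, (inner ℝ v (Matrix.toEuclideanLin (projMat n S) x) : ℝ) = inner ℝ v x := by
    intro v hv
    rw [← inner_projE, projE_of_mem (hV hv)]
  simp only [Submodule.mem_orthogonal]
  exact ⟨fun h u hu => (key u hu).symm.trans (h u hu), fun h u hu => (key u hu).trans (h u hu)⟩

lemma orthogonal_iSup_blockwise {W : P → Submodule ℝ (EuclideanSpace ℝ (BIdx n))}
    (hW : ∀ j, W j ≤ coordE n {j}) :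
    (⨆ j, W j)ᗮ = ⨆ j, (coordE n {j} ⊓ (W j)ᗮ) := by
  ext x
  rw [mem_iSup_blockwise (fun j => inf_le_left), ← Submodule.iInf_orthogonal,
    Submodule.mem_iInf]
  constructor
  · intro h j
    rw [Submodule.mem_inf]
    exact ⟨projE_mem _ x, (mem_orthogonal_projE (hW j) x).mpr (h j)⟩
  · intro h j
    exact (mem_orthogonal_projE (hW j) x).mp (Submodule.mem_inf.mp (h j)).2

lemma inf_orthogonal_map_projE (S : Set P) (V : Submodule ℝ (EuclideanSpace ℝ (BIdx n))) :
    coordE n S ⊓ (Submodule.map (Matrix.toEuclideanLin (projMat n S)) V)ᗮ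
      = coordE n S ⊓ Vᗮ := by
  ext x
  simp only [Submodule.mem_inf, Submodule.mem_orthogonal, and_congr_right_iff]
  intro hx
  constructor
  · intro h u hu
    have := h (Matrix.toEuclideanLin (projMat n S) u) ⟨u, hu, rfl⟩
    rwa [inner_projE, projE_of_mem hx] at this
  · rintro h u ⟨v, hv, rfl⟩
    rw [inner_projE, projE_of_mem hx]
    exact h v hv

lemma relOrth_relOrth {S : Set P} {U : Submodule ℝ (EuclideanSpace ℝ (BIdx n))}
    (hU : U ≤ coordE n S) :
    coordE n S ⊓ (coordE n S ⊓ Uᗮ)ᗮ = U := by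
  apply le_antisymm
  · rintro x ⟨hxS, hx⟩
    rw [← Submodule.orthogonal_orthogonal U]
    rw [Submodule.mem_orthogonal]
    intro v hv
    have h1 : Matrix.toEuclideanLin (projMat n S) v ∈ coordE n S ⊓ Uᗮ :=
      ⟨projE_mem _ v, (mem_orthogonal_projE hU v).mpr hv⟩
    have h2 := hx _ h1
    rwa [inner_projE, projE_of_mem hxS] at h2
  · intro u hu
    have h2 : u ∈ (coordE n S ⊓ Uᗮ)ᗮ := by
      rw [Submodule.mem_orthogonal]
      rintro w ⟨hwS, hw⟩
      rw [real_inner_comm]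
      exact hw u hu
    exact ⟨hU hu, h2⟩

lemma map_projE_orthogonal (S : Set P) (V : Submodule ℝ (EuclideanSpace ℝ (BIdx n))) :
    Submodule.map (Matrix.toEuclideanLin (projMat n S)) Vᗮ
      = coordE n S ⊓ (coordE n S ⊓ V)ᗮ := by
  have hT : Submodule.map (Matrix.toEuclideanLin (projMat n S)) Vᗮ ≤ coordE n S := by
    rintro x ⟨v, hv, rfl⟩
    exact projE_mem _ v
  have h1 := relOrth_relOrth hT
  rw [inf_orthogonal_map_projE, Submodule.orthogonal_orthogonal] at h1
  exact h1.symm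

lemma projMat_mul_embMat (S : Set P) : projMat n S * embMat n S = embMat n S := by
  rw [← embMat_mul_transpose, Matrix.mul_assoc, embMat_transpose_mul, Matrix.mul_one]

lemma toEuclideanLin_one' : (Matrix.toEuclideanLin (1 : Matrix (BIdx n) (BIdx n) ℝ)) =
    LinearMap.id := by
  apply LinearMap.ext fun x => ?_
  show WithLp.toLp 2 ((1 : Matrix (BIdx n) (BIdx n) ℝ) *ᵥ x.ofLp) = x
  rw [Matrix.one_mulVec]

lemma embEt_apply (S : Set P) [Fintype {a : BIdx n // a.1 ∈ S}]
    (x : EuclideanSpace ℝ (BIdx n)) (q : {a : BIdx n // a.1 ∈ S}) :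
    Matrix.toEuclideanLin (embMat n S)ᵀ x q = x q.1 := by
  show (embMat n S)ᵀ.mulVec x q = _
  unfold embMat mulVec dotProduct
  simp only [transpose_apply, of_apply]
  rw [Finset.sum_eq_single (q.1 : BIdx n)]
  · rw [if_pos rfl, one_mul]
  · intro b _ hb
    rw [if_neg hb, zero_mul]
  · simp

lemma embE_mem_coordE (S : Set P) [Fintype {a : BIdx n // a.1 ∈ S}]
    (v : EuclideanSpace ℝ {a : BIdx n // a.1 ∈ S}) :
    Matrix.toEuclideanLin (embMat n S) v ∈ coordE n S := by
  rw [mem_coordE]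
  intro a ha
  rw [embE_apply, dif_neg ha]

lemma embE_embEt (S : Set P) [Fintype {a : BIdx n // a.1 ∈ S}]
    {x : EuclideanSpace ℝ (BIdx n)} (hx : x ∈ coordE n S) :
    Matrix.toEuclideanLin (embMat n S) (Matrix.toEuclideanLin (embMat n S)ᵀ x) = x := by
  ext a
  rw [embE_apply]
  by_cases h : a.1 ∈ S
  · rw [dif_pos h, embEt_apply]
  · rw [dif_neg h, (mem_coordE.mp hx) a h]

lemma range_embE (S : Set P) [Fintype {a : BIdx n // a.1 ∈ S}] :
    LinearMap.range (Matrix.toEuclideanLin (embMat n S)) = coordE n S := by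
  apply le_antisymm
  · rintro _ ⟨y, rfl⟩
    exact embE_mem_coordE S y
  · intro x hx
    exact ⟨Matrix.toEuclideanLin (embMat n S)ᵀ x, embE_embEt S hx⟩

lemma inner_embE (S : Set P) [Fintype {a : BIdx n // a.1 ∈ S}] (y y' : EuclideanSpace ℝ {a : BIdx n // a.1 ∈ S}) :
    (inner ℝ (Matrix.toEuclideanLin (embMat n S) y)
      (Matrix.toEuclideanLin (embMat n S) y') : ℝ) = inner ℝ y y' := by
  rw [inner_toEuclideanLin, ← LinearMap.comp_apply, ← toEuclideanLin_mul,
    embMat_transpose_mul]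
  congr 1
  show WithLp.toLp 2 ((1 : Matrix _ _ ℝ) *ᵥ y'.ofLp) = y'
  rw [Matrix.one_mulVec]

lemma map_embE_orthogonal (S : Set P) [Fintype {a : BIdx n // a.1 ∈ S}]
    (W : Submodule ℝ (EuclideanSpace ℝ {a : BIdx n // a.1 ∈ S})) :
    Submodule.map (Matrix.toEuclideanLin (embMat n S)) Wᗮ
      = coordE n S ⊓ (Submodule.map (Matrix.toEuclideanLin (embMat n S)) W)ᗮ := by
  apply le_antisymm
  · rintro _ ⟨v, hv, rfl⟩
    refine ⟨embE_mem_coordE S v, ?_⟩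
    refine (Submodule.mem_orthogonal _ _).mpr ?_
    rintro _ ⟨w, hw, rfl⟩
    rw [inner_embE]
    exact hv w hw
  · rintro x ⟨hx1, hx2⟩
    obtain ⟨v, rfl⟩ : x ∈ LinearMap.range (Matrix.toEuclideanLin (embMat n S)) :=
      ⟨Matrix.toEuclideanLin (embMat n S)ᵀ x, embE_embEt S hx1⟩
    refine ⟨v, ?_, rfl⟩
    refine (Submodule.mem_orthogonal _ _).mpr ?_
    intro w hw
    have := hx2 (Matrix.toEuclideanLin (embMat n S) w)
      ⟨w, hw, rfl⟩
    rwa [inner_embE] at this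

end blocks

section bmat
set_option linter.unusedSectionVars false
variable {P : Type*} [Fintype P] [DecidableEq P]

lemma mul_embMat {n m : P → ℕ} (G : Matrix (BIdx n) (BIdx m) ℝ) (Q S : Set P)
    [Fintype {a : BIdx n // a.1 ∈ Q}] [Fintype {a : BIdx m // a.1 ∈ S}]
    (h : ∀ (a : BIdx n) (b : BIdx m), b.1 ∈ S → a.1 ∉ Q → G a b = 0) :
    G * embMat m S = embMat n Q * bcmp G Q S := by
  ext a q
  unfold embMat bcmp
  simp only [mul_apply, of_apply, submatrix_apply]
  rw [Finset.sum_eq_single (q : BIdx m)]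
  · rw [if_pos rfl, mul_one]
    by_cases hQ : a.1 ∈ Q
    · rw [Finset.sum_eq_single (⟨a, hQ⟩ : {x : BIdx n // x.1 ∈ Q})]
      · rw [if_pos rfl, one_mul]
      · intro p _ hp
        rw [if_neg (fun he => hp (Subtype.ext he.symm)), zero_mul]
      · simp
    · rw [h a q q.2 hQ]
      apply (Finset.sum_eq_zero ?_).symm
      intro p _
      rw [if_neg, zero_mul]
      intro he
      exact hQ (he ▸ p.2)
  · intro b _ hb
    rw [if_neg hb, mul_zero]
  · simp

lemma pow_mul_embMat {n : P → ℕ} (A : Matrix (BIdx n) (BIdx n) ℝ) (D : Set P)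
    [Fintype {a : BIdx n // a.1 ∈ D}]
    (h : ∀ (a b : BIdx n), b.1 ∈ D → a.1 ∉ D → A a b = 0) (k : ℕ) :
    A ^ k * embMat n D = embMat n D * (bcmp A D D) ^ k := by
  induction k with
  | zero => rw [pow_zero, pow_zero, Matrix.one_mul, Matrix.mul_one]
  | succ k ih =>
    rw [pow_succ', pow_succ', Matrix.mul_assoc, ih, ← Matrix.mul_assoc,
      mul_embMat A D D h, Matrix.mul_assoc]

lemma sum_projMat (m : P → ℕ) : (∑ i : P, projMat m {i}) = 1 := by
  ext a b
  rw [Matrix.sum_apply]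
  unfold projMat
  simp only [of_apply]
  by_cases hab : a = b
  · subst hab
    rw [Matrix.one_apply_eq]
    have : ∀ i : P, (if a = a ∧ a.1 ∈ ({i} : Set P) then (1:ℝ) else 0)
        = if a.1 = i then 1 else 0 := by
      intro i
      by_cases hi : a.1 = i
      · rw [if_pos ⟨rfl, hi⟩, if_pos hi]
      · rw [if_neg (fun hc => hi hc.2), if_neg hi]
    simp only [this]
    simp
  · rw [Matrix.one_apply_ne hab]
    apply Finset.sum_eq_zero
    intro i _
    rw [if_neg (fun hc => hab hc.1)]

lemma range_eq_iSup_cols {n m : P → ℕ} (M : Matrix (BIdx n) (BIdx m) ℝ) :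
    LinearMap.range (Matrix.toEuclideanLin M)
      = ⨆ i : P, LinearMap.range (Matrix.toEuclideanLin (M * embMat m {i})) := by
  apply le_antisymm
  · rintro _ ⟨v, rfl⟩
    have hv : Matrix.toEuclideanLin M v
        = ∑ i : P, Matrix.toEuclideanLin (M * projMat m {i}) v := by
      rw [← LinearMap.sum_apply, ← map_sum, ← Matrix.mul_sum, sum_projMat, Matrix.mul_one]
    rw [hv]
    apply Submodule.sum_mem
    intro i _
    apply Submodule.mem_iSup_of_mem i
    refine ⟨Matrix.toEuclideanLin (embMat m {i})ᵀ v, ?_⟩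
    rw [← LinearMap.comp_apply, ← toEuclideanLin_mul, Matrix.mul_assoc, embMat_mul_transpose]
  · refine iSup_le fun i => ?_
    rw [toEuclideanLin_mul, LinearMap.range_comp]
    exact LinearMap.map_le_range

end bmat
section main
set_option linter.unusedSectionVars false
variable {P : Type*} [Fintype P] [DecidableEq P]

lemma mem_downSet_singleton {le : P → P → Prop} {a i : P} :
    a ∈ downSet le {i} ↔ le a i :=
  ⟨fun ⟨j, hj, h⟩ => hj ▸ h, fun h => ⟨i, rfl, h⟩⟩

lemma RiE_le_coordE (le : P → P → Prop) {n m : P → ℕ}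
    (A : Matrix (BIdx n) (BIdx n) ℝ) (B : Matrix (BIdx n) (BIdx m) ℝ) (i : P) :
    RiE le A B i ≤ coordE n (downSet le {i}) := by
  unfold RiE
  rintro _ ⟨y, hy, rfl⟩
  exact embE_mem_coordE _ y

lemma RiE_eq (le : P → P → Prop) (htrans : ∀ i j k, le i j → le j k → le i k)
    {n m : P → ℕ} (A : Matrix (BIdx n) (BIdx n) ℝ) (B : Matrix (BIdx n) (BIdx m) ℝ)
    (hA : Inc le A) (hB : Inc le B) (i : P) :
    RiE le A B i = ⨆ k : ℕ,
      LinearMap.range (Matrix.toEuclideanLin (A ^ k * (B * embMat m {i}))) := by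
  unfold RiE
  rw [reachE_eq_iSup, Submodule.map_iSup]
  refine iSup_congr fun k => ?_
  rw [← LinearMap.range_comp, ← toEuclideanLin_mul]
  congr 1
  have hBcol : B * embMat m {i} = embMat n (downSet le {i}) * bcmp B (downSet le {i}) {i} := by
    apply mul_embMat
    intro a b hb ha
    refine hB a b fun hle => ha ?_
    rw [mem_downSet_singleton]
    exact hb ▸ hle
  have hApow : A ^ k * embMat n (downSet le {i})
      = embMat n (downSet le {i}) * (bcmp A (downSet le {i}) (downSet le {i})) ^ k := by
    apply pow_mul_embMat
    intro a b hb ha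
    refine hA a b fun hle => ha ?_
    rw [mem_downSet_singleton] at hb ⊢
    exact htrans a.1 b.1 i hle hb
  rw [hBcol,
    show A ^ k * (embMat n (downSet le {i}) * bcmp B (downSet le {i}) {i})
        = embMat n (downSet le {i}) * ((bcmp A (downSet le {i}) (downSet le {i})) ^ k
          * bcmp B (downSet le {i}) {i}) by
      rw [← Matrix.mul_assoc, hApow, Matrix.mul_assoc]]

lemma reachE_decomp (le : P → P → Prop) (htrans : ∀ i j k, le i j → le j k → le i k)
    {n m : P → ℕ} (A : Matrix (BIdx n) (BIdx n) ℝ) (B : Matrix (BIdx n) (BIdx m) ℝ)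
    (hA : Inc le A) (hB : Inc le B) :
    reachE A B = ⨆ i : P, RiE le A B i := by
  rw [reachE_eq_iSup]
  calc (⨆ k : ℕ, LinearMap.range (Matrix.toEuclideanLin (A ^ k * B)))
      = ⨆ k : ℕ, ⨆ i : P,
          LinearMap.range (Matrix.toEuclideanLin (A ^ k * B * embMat m {i})) :=
        iSup_congr fun k => range_eq_iSup_cols _
    _ = ⨆ i : P, ⨆ k : ℕ,
          LinearMap.range (Matrix.toEuclideanLin (A ^ k * B * embMat m {i})) := iSup_comm
    _ = ⨆ i : P, RiE le A B i := by
        refine iSup_congr fun i => ?_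
        rw [RiE_eq le htrans A B hA hB i]
        exact iSup_congr fun k => by rw [Matrix.mul_assoc]

lemma NiE_flip (le : P → P → Prop) {n m : P → ℕ}
    (A : Matrix (BIdx n) (BIdx n) ℝ) (B : Matrix (BIdx n) (BIdx m) ℝ) (i : P) :
    NiE (flip le) Bᵀ Aᵀ i = coordE n (downSet le {i}) ⊓ (RiE le A B i)ᗮ := by
  have e : NiE (flip le) Bᵀ Aᵀ i
      = Submodule.map (Matrix.toEuclideanLin (embMat n (downSet le {i})))
        (unobsE (bcmp B (downSet le {i}) {i})ᵀ
          (bcmp A (downSet le {i}) (downSet le {i}))ᵀ) := rfl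
  rw [e, unobsE_transpose, map_embE_orthogonal]
  rfl

lemma circ_duality {n m : P → ℕ}
    (A : Matrix (BIdx n) (BIdx n) ℝ) (B : Matrix (BIdx n) (BIdx m) ℝ) :
    Ncirc Bᵀ Aᵀ = (Rcirc A B)ᗮ := by
  unfold Ncirc Rcirc
  rw [unobsE_transpose]
  calc (⨆ j, Submodule.map (Matrix.toEuclideanLin (projMat n {j})) ((reachE A B)ᗮ))
      = ⨆ j, coordE n {j} ⊓ (coordE n {j} ⊓ reachE A B)ᗮ :=
        iSup_congr fun j => map_projE_orthogonal _ _
    _ = (⨆ j, coordE n {j} ⊓ reachE A B)ᗮ :=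
        (orthogonal_iSup_blockwise fun j => inf_le_left).symm

lemma bar_til_duality (le : P → P → Prop) (hrefl : ∀ i, le i i)
    (htrans : ∀ i j k, le i j → le j k → le i k) {n m : P → ℕ}
    (A : Matrix (BIdx n) (BIdx n) ℝ) (B : Matrix (BIdx n) (BIdx m) ℝ)
    (hA : Inc le A) (hB : Inc le B) :
    Nbar (flip le) Bᵀ Aᵀ = (Rtil A B)ᗮ := by
  unfold Nbar Rtil
  have h1 : ∀ j i, le j i → NiE (flip le) Bᵀ Aᵀ i ⊓ coordE n {j}
      = coordE n {j} ⊓ (RiE le A B i)ᗮ := by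
    intro j i h
    have hle : coordE n {j} ≤ coordE n (downSet le {i}) := by
      apply coordE_mono
      intro p hp
      rw [Set.mem_singleton_iff] at hp
      subst hp
      exact mem_downSet_singleton.mpr h
    rw [NiE_flip le A B i, inf_comm, ← inf_assoc, inf_eq_left.mpr hle]
  have hblock : ∀ j, (⨅ i, ⨅ _ : le j i, (coordE n {j} ⊓ (RiE le A B i)ᗮ))
      = coordE n {j} ⊓ (reachE A B)ᗮ := by
    intro j
    apply le_antisymm
    · intro x hx
      have hxx : ∀ i, le j i → x ∈ coordE n {j} ⊓ (RiE le A B i)ᗮ := fun i h =>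
        (Submodule.mem_iInf _).mp ((Submodule.mem_iInf _).mp hx i) h
      have hx2 : x ∈ (reachE A B)ᗮ := by
        rw [reachE_decomp le htrans A B hA hB, ← Submodule.iInf_orthogonal,
          Submodule.mem_iInf]
        intro i
        by_cases h : le j i
        · exact (hxx i h).2
        · have h2 : coordE n {j} ≤ (coordE n (downSet le {i}))ᗮ := by
            apply coordE_orthogonal
            intro p hp hj
            rw [Set.mem_singleton_iff] at hj
            exact h (hj ▸ mem_downSet_singleton.mp hp)
          exact Submodule.orthogonal_le (RiE_le_coordE le A B i) (h2 (hxx j (hrefl j)).1)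
      exact ⟨(hxx j (hrefl j)).1, hx2⟩
    · refine le_iInf fun i => le_iInf fun h => inf_le_inf_left _ ?_
      apply Submodule.orthogonal_le
      rw [reachE_decomp le htrans A B hA hB]
      exact le_iSup _ i
  have hW : ∀ j, Submodule.map (Matrix.toEuclideanLin (projMat n {j})) (reachE A B)
      ≤ coordE n {j} := by
    rintro j _ ⟨v, hv, rfl⟩
    exact projE_mem _ v
  rw [orthogonal_iSup_blockwise hW]
  refine iSup_congr fun j => ?_
  rw [inf_orthogonal_map_projE, ← hblock j]
  exact iInf_congr fun i => iInf_congr_Prop Iff.rfl fun h => h1 j i h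

set_option maxHeartbeats 2000000 in
lemma orth_iSup_prop {E' : Type*} [NormedAddCommGroup E'] [InnerProductSpace ℝ E']
    {q : Prop} (M : Submodule ℝ E') :
    (⨆ _ : q, M)ᗮ = ⨅ _ : q, Mᗮ := by
  by_cases h : q
  · rw [iSup_pos h, iInf_pos h]
  · rw [iSup_neg h, iInf_neg h, Submodule.bot_orthogonal_eq_top]

lemma til_bar_duality (le : P → P → Prop) (hrefl : ∀ i, le i i)
    (htrans : ∀ i j k, le i j → le j k → le i k) {n m : P → ℕ}
    (A : Matrix (BIdx n) (BIdx n) ℝ) (B : Matrix (BIdx n) (BIdx m) ℝ)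
    (hA : Inc le A) (hB : Inc le B) :
    Ntil (flip le) Bᵀ Aᵀ = (Rbar le A B)ᗮ := by
  unfold Ntil Rbar
  have h1 : ∀ j i, le j i →
      Submodule.map (Matrix.toEuclideanLin (projMat n {j})) (NiE (flip le) Bᵀ Aᵀ i)
        = coordE n {j} ⊓ (coordE n {j} ⊓ RiE le A B i)ᗮ := by
    intro j i h
    have hsub : ({j} : Set P) ⊆ downSet le {i} := by
      intro p hp
      rw [Set.mem_singleton_iff] at hp
      subst hp
      exact mem_downSet_singleton.mpr h
    rw [NiE_flip le A B i]
    have hmm : Submodule.map (Matrix.toEuclideanLin (projMat n {j}))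
        (coordE n (downSet le {i}) ⊓ (RiE le A B i)ᗮ)
        = Submodule.map (Matrix.toEuclideanLin (projMat n {j})) ((RiE le A B i)ᗮ) := by
      apply le_antisymm (Submodule.map_mono inf_le_right)
      rintro _ ⟨v, hv, rfl⟩
      refine ⟨Matrix.toEuclideanLin (projMat n (downSet le {i})) v,
        ⟨projE_mem _ v, (mem_orthogonal_projE (RiE_le_coordE le A B i) v).mpr hv⟩, ?_⟩
      exact projE_projE hsub v
    rw [hmm, map_projE_orthogonal]
  have hW : ∀ j, (⨆ i, ⨆ _ : le j i, (coordE n {j} ⊓ RiE le A B i)) ≤ coordE n {j} :=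
    fun j => iSup_le fun i => iSup_le fun _ => inf_le_left
  rw [orthogonal_iSup_blockwise hW]
  refine iSup_congr fun j => ?_
  have horth : (⨆ i, ⨆ _ : le j i, (coordE n {j} ⊓ RiE le A B i))ᗮ
      = ⨅ i, ⨅ _ : le j i, (coordE n {j} ⊓ RiE le A B i)ᗮ := by
    rw [← Submodule.iInf_orthogonal]
    exact iInf_congr fun i => orth_iSup_prop _
  rw [horth]
  have hdist : coordE n {j} ⊓ (⨅ i, ⨅ _ : le j i, (coordE n {j} ⊓ RiE le A B i)ᗮ)
      = ⨅ i, ⨅ _ : le j i, (coordE n {j} ⊓ (coordE n {j} ⊓ RiE le A B i)ᗮ) := by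
    apply le_antisymm
    · exact le_iInf fun i => le_iInf fun h =>
        inf_le_inf_left _ (iInf_le_of_le i (iInf_le _ h))
    · intro x hx
      have hx' : ∀ i, ∀ h : le j i, x ∈ coordE n {j} ⊓ (coordE n {j} ⊓ RiE le A B i)ᗮ :=
        fun i h => (Submodule.mem_iInf _).mp ((Submodule.mem_iInf _).mp hx i) h
      have h2 : x ∈ (⨅ i, ⨅ _ : le j i, (coordE n {j} ⊓ RiE le A B i)ᗮ) := by
        rw [Submodule.mem_iInf]
        intro i
        rw [Submodule.mem_iInf]
        intro h
        exact (hx' i h).2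
      exact ⟨(hx' j (hrefl j)).1, h2⟩
  rw [hdist]
  exact iInf_congr fun i => iInf_congr_Prop Iff.rfl fun h => h1 j i h

end main

/-- Duality between the structured controllability and observability subspaces of a
poset-causal system `Σ_P ∼ (A,B,C,D)` and its dual system `Σ_{P_d} ∼ (Aᵀ,Cᵀ,Bᵀ,Dᵀ)` over the
dual poset (the order `flip le`): `(R̄)^d = Ñᗮ`, `(R°)^d = (N°)ᗮ`, `(R̃)^d = N̄ᗮ`,
`(N̄)^d = R̃ᗮ`, `(N°)^d = (R°)ᗮ` and `(Ñ)^d = R̄ᗮ`. -/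
theorem structured_duality (le : P → P → Prop)
    (hrefl : ∀ i, le i i) (htrans : ∀ i j k, le i j → le j k → le i k)
    (hanti : ∀ i j, le i j → le j i → i = j)
    (n m r : P → ℕ)
    (A : Matrix (BIdx n) (BIdx n) ℝ) (B : Matrix (BIdx n) (BIdx m) ℝ)
    (C : Matrix (BIdx r) (BIdx n) ℝ)
    (hA : Inc le A) (hB : Inc le B) (hC : Inc le C) :
    Rbar (flip le) Aᵀ Cᵀ = (Ntil le C A)ᗮ ∧
      Rcirc Aᵀ Cᵀ = (Ncirc C A)ᗮ ∧
      Rtil Aᵀ Cᵀ = (Nbar le C A)ᗮ ∧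
      Nbar (flip le) Bᵀ Aᵀ = (Rtil A B)ᗮ ∧
      Ncirc Bᵀ Aᵀ = (Rcirc A B)ᗮ ∧
      Ntil (flip le) Bᵀ Aᵀ = (Rbar le A B)ᗮ := by
  have flipflip : flip (flip le) = le := rfl
  have hrefl' : ∀ i, flip le i i := hrefl
  have htrans' : ∀ i j k, flip le i j → flip le j k → flip le i k :=
    fun i j k hij hjk => htrans k j i hjk hij
  have hA' : Inc (flip le) Aᵀ := fun a b h => hA b a h
  have hC' : Inc (flip le) Cᵀ := fun a b h => hC b a h
  refine ⟨?_, ?_, ?_, bar_til_duality le hrefl htrans A B hA hB,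
    circ_duality A B, til_bar_duality le hrefl htrans A B hA hB⟩
  · have h := til_bar_duality (flip le) hrefl' htrans' Aᵀ Cᵀ hA' hC'
    rw [transpose_transpose, transpose_transpose, flipflip] at h
    rw [h, Submodule.orthogonal_orthogonal]
  · have h := circ_duality Aᵀ Cᵀ
    rw [transpose_transpose, transpose_transpose] at h
    rw [h, Submodule.orthogonal_orthogonal]
  · have h := bar_til_duality (flip le) hrefl' htrans' Aᵀ Cᵀ hA' hC'
    rw [transpose_transpose, transpose_transpose, flipflip] at h
    rw [h, Submodule.orthogonal_orthogonal]
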